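/- Let R = K[x,y,z], I = (x^2 + yz, xy, xz), and τ the lexicographic term order with x > y > z. Then in_τ(I) = (x^2, xy, xz, yz^2, y^2z). -/

import Mathlib

open MvPolynomial

variable {K : Type*} [Field K] {n : ℕ}

/-- `m` is the `r`-leading monomial of `f`. -/
def IsLeadMon (r : (Fin n →₀ ℕ) → (Fin n →₀ ℕ) → Prop)
    (f : MvPolynomial (Fin n) K) (m : Fin n →₀ ℕ) : Prop :=
  m ∈ f.support ∧ ∀ m' ∈ f.support, m' ≠ m → r m' m

/-- The initial ideal of `I` with respect to the order `r`. -/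
noncomputable def initialIdeal (r : (Fin n →₀ ℕ) → (Fin n →₀ ℕ) → Prop)
    (I : Ideal (MvPolynomial (Fin n) K)) : Ideal (MvPolynomial (Fin n) K) :=
  Ideal.span {p | ∃ f ∈ I, f ≠ 0 ∧ ∃ m, IsLeadMon r f m ∧ p = monomial m (1 : K)}

/-- The strict lexicographic order on monomials with `x_1 > x_2 > ... > x_n`:
`m <_lex m'` iff at the first index where they differ, `m'` has larger exponent. -/
def LexLT {n : ℕ} (m m' : Fin n →₀ ℕ) : Prop :=
  ∃ i : Fin n, (∀ j : Fin n, j < i → m j = m' j) ∧ m i < m' i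

namespace GB

lemma finsupp3_ext {a b : Fin 3 →₀ ℕ} (h0 : a 0 = b 0) (h1 : a 1 = b 1) (h2 : a 2 = b 2) :
    a = b := by
  ext i
  match i with
  | ⟨0, _⟩ => exact h0
  | ⟨1, _⟩ => exact h1
  | ⟨2, _⟩ => exact h2

lemma lexlt_iff (m m' : Fin 3 →₀ ℕ) :
    LexLT m m' ↔ (m 0 < m' 0 ∨ (m 0 = m' 0 ∧ (m 1 < m' 1 ∨ (m 1 = m' 1 ∧ m 2 < m' 2)))) := by
  constructor
  · rintro ⟨i, hj, hi⟩
    fin_cases i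
    · exact Or.inl hi
    · exact Or.inr ⟨hj 0 (by decide), Or.inl hi⟩
    · exact Or.inr ⟨hj 0 (by decide), Or.inr ⟨hj 1 (by decide), hi⟩⟩
  · rintro (h | ⟨h0, h | ⟨h1, h⟩⟩)
    · exact ⟨0, fun j hj => absurd hj (by fin_cases j <;> decide), h⟩
    · refine ⟨1, fun j hj => ?_, h⟩
      fin_cases j
      · exact h0
      · exact absurd hj (by decide)
      · exact absurd hj (by decide)
    · refine ⟨2, fun j hj => ?_, h⟩
      fin_cases j
      · exact h0
      · exact h1
      · exact absurd hj (by decide)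

def toL (m : Fin 3 →₀ ℕ) : ℕ ×ₗ (ℕ ×ₗ ℕ) := toLex (m 0, toLex (m 1, m 2))

lemma lexlt_iff_toL (m m' : Fin 3 →₀ ℕ) : LexLT m m' ↔ toL m < toL m' := by
  rw [lexlt_iff]
  simp only [toL, Prod.Lex.lt_iff, ofLex_toLex]

lemma toL_inj {m m' : Fin 3 →₀ ℕ} (h : toL m = toL m') : m = m' := by
  unfold toL at h
  have h1 := toLex.injective h
  have h2 := toLex.injective (congrArg Prod.snd h1)
  exact finsupp3_ext (congrArg Prod.fst h1) (congrArg Prod.fst h2) (congrArg Prod.snd h2)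

lemma lexlt_wf : WellFounded (@LexLT 3) :=
  Subrelation.wf (fun {a b} h => (lexlt_iff_toL a b).mp h)
    (InvImage.wf toL (wellFounded_lt : WellFounded ((· < ·) : ℕ ×ₗ (ℕ ×ₗ ℕ) → _ → Prop)))

lemma lexlt_irrefl (m : Fin 3 →₀ ℕ) : ¬ LexLT m m := by rw [lexlt_iff]; omega

lemma lexlt_trans {a b c : Fin 3 →₀ ℕ} (h1 : LexLT a b) (h2 : LexLT b c) : LexLT a c := by
  rw [lexlt_iff] at *
  omega

lemma lexlt_add (d : Fin 3 →₀ ℕ) {a b : Fin 3 →₀ ℕ} (h : LexLT a b) :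
    LexLT (d + a) (d + b) := by
  simp only [lexlt_iff, Finsupp.add_apply] at *
  omega

lemma exists_lex_max (T : Finset (Fin 3 →₀ ℕ)) (hT : T.Nonempty) :
    ∃ m ∈ T, ∀ m' ∈ T, m' = m ∨ LexLT m' m := by
  obtain ⟨m, hm, hmax⟩ := T.exists_max_image toL hT
  refine ⟨m, hm, fun m' hm' => ?_⟩
  rcases eq_or_lt_of_le (hmax m' hm') with heq | hlt
  · exact Or.inl (toL_inj heq)
  · exact Or.inr ((lexlt_iff_toL m' m).mpr hlt)

variable {K : Type*} [Field K]

noncomputable def e0 : Fin 3 →₀ ℕ := Finsupp.single 0 2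
noncomputable def e1 : Fin 3 →₀ ℕ := Finsupp.single 0 1 + Finsupp.single 1 1
noncomputable def e2 : Fin 3 →₀ ℕ := Finsupp.single 0 1 + Finsupp.single 2 1
noncomputable def e3 : Fin 3 →₀ ℕ := Finsupp.single 1 1 + Finsupp.single 2 2
noncomputable def e4 : Fin 3 →₀ ℕ := Finsupp.single 1 2 + Finsupp.single 2 1
noncomputable def eyz : Fin 3 →₀ ℕ := Finsupp.single 1 1 + Finsupp.single 2 1

lemma e0_apply : (e0 0, e0 1, e0 2) = (2, 0, 0) := by simp [e0, Finsupp.single_apply]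
lemma e1_apply : (e1 0, e1 1, e1 2) = (1, 1, 0) := by simp [e1, Finsupp.single_apply]
lemma e2_apply : (e2 0, e2 1, e2 2) = (1, 0, 1) := by simp [e2, Finsupp.single_apply]
lemma e3_apply : (e3 0, e3 1, e3 2) = (0, 1, 2) := by simp [e3, Finsupp.single_apply]
lemma e4_apply : (e4 0, e4 1, e4 2) = (0, 2, 1) := by simp [e4, Finsupp.single_apply]
lemma eyz_apply : (eyz 0, eyz 1, eyz 2) = (0, 1, 1) := by simp [eyz, Finsupp.single_apply]

lemma le_of_apply {e m : Fin 3 →₀ ℕ} (h0 : e 0 ≤ m 0) (h1 : e 1 ≤ m 1) (h2 : e 2 ≤ m 2) :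
    e ≤ m := by
  rw [Finsupp.le_def]
  intro i
  match i with
  | ⟨0, _⟩ => exact h0
  | ⟨1, _⟩ => exact h1
  | ⟨2, _⟩ => exact h2

lemma hg0 : ((X 0) ^ 2 + X 1 * X 2 : MvPolynomial (Fin 3) K)
    = monomial e0 1 + monomial eyz 1 := by
  rw [X_pow_eq_monomial, ← pow_one (X 1), ← pow_one (X 2), X_pow_eq_monomial,
    X_pow_eq_monomial, monomial_mul, one_mul]
  rfl

lemma hg1 : ((X 0) * X 1 : MvPolynomial (Fin 3) K) = monomial e1 1 := by
  rw [← pow_one (X 0), ← pow_one (X 1), X_pow_eq_monomial, X_pow_eq_monomial,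
    monomial_mul, one_mul]
  rfl

lemma hg2 : ((X 0) * X 2 : MvPolynomial (Fin 3) K) = monomial e2 1 := by
  rw [← pow_one (X 0), ← pow_one (X 2), X_pow_eq_monomial, X_pow_eq_monomial,
    monomial_mul, one_mul]
  rfl

lemma hg3 : ((X 1) * (X 2) ^ 2 : MvPolynomial (Fin 3) K) = monomial e3 1 := by
  rw [← pow_one (X 1), X_pow_eq_monomial, X_pow_eq_monomial, monomial_mul, one_mul]
  rfl

lemma hg4 : ((X 1) ^ 2 * X 2 : MvPolynomial (Fin 3) K) = monomial e4 1 := by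
  rw [← pow_one (X 2), X_pow_eq_monomial, X_pow_eq_monomial, monomial_mul, one_mul]
  rfl

/-- A monomial is "nonstandard" if it is divisible by one of the five lead monomials. -/
def Nst (m : Fin 3 →₀ ℕ) : Prop :=
  2 ≤ m 0 ∨ (1 ≤ m 0 ∧ 1 ≤ m 1) ∨ (1 ≤ m 0 ∧ 1 ≤ m 2) ∨ (1 ≤ m 1 ∧ 2 ≤ m 2) ∨
    (2 ≤ m 1 ∧ 1 ≤ m 2)

lemma mem1 (I : Ideal (MvPolynomial (Fin 3) K))
    (hI : I = Ideal.span { (X 0) ^ 2 + X 1 * X 2, X 0 * X 1, X 0 * X 2 }) :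
    ((X 0) ^ 2 + X 1 * X 2 : MvPolynomial (Fin 3) K) ∈ I := by
  rw [hI]; exact Ideal.subset_span (Set.mem_insert _ _)

lemma mem2 (I : Ideal (MvPolynomial (Fin 3) K))
    (hI : I = Ideal.span { (X 0) ^ 2 + X 1 * X 2, X 0 * X 1, X 0 * X 2 }) :
    ((X 0) * X 1 : MvPolynomial (Fin 3) K) ∈ I := by
  rw [hI]; exact Ideal.subset_span (Set.mem_insert_of_mem _ (Set.mem_insert _ _))

lemma mem3 (I : Ideal (MvPolynomial (Fin 3) K))
    (hI : I = Ideal.span { (X 0) ^ 2 + X 1 * X 2, X 0 * X 1, X 0 * X 2 }) :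
    ((X 0) * X 2 : MvPolynomial (Fin 3) K) ∈ I := by
  rw [hI]
  exact Ideal.subset_span (Set.mem_insert_of_mem _ (Set.mem_insert_of_mem _ rfl))

lemma mem4 (I : Ideal (MvPolynomial (Fin 3) K))
    (hI : I = Ideal.span { (X 0) ^ 2 + X 1 * X 2, X 0 * X 1, X 0 * X 2 }) :
    ((X 1) * (X 2) ^ 2 : MvPolynomial (Fin 3) K) ∈ I := by
  have h : ((X 1) * (X 2) ^ 2 : MvPolynomial (Fin 3) K)
      = X 2 * ((X 0) ^ 2 + X 1 * X 2) - X 0 * (X 0 * X 2) := by ring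
  rw [h]
  exact sub_mem (Ideal.mul_mem_left _ _ (mem1 I hI)) (Ideal.mul_mem_left _ _ (mem3 I hI))

lemma mem5 (I : Ideal (MvPolynomial (Fin 3) K))
    (hI : I = Ideal.span { (X 0) ^ 2 + X 1 * X 2, X 0 * X 1, X 0 * X 2 }) :
    ((X 1) ^ 2 * X 2 : MvPolynomial (Fin 3) K) ∈ I := by
  have h : ((X 1) ^ 2 * X 2 : MvPolynomial (Fin 3) K)
      = X 1 * ((X 0) ^ 2 + X 1 * X 2) - X 0 * (X 0 * X 1) := by ring
  rw [h]
  exact sub_mem (Ideal.mul_mem_left _ _ (mem1 I hI)) (Ideal.mul_mem_left _ _ (mem2 I hI))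

/-- The reduction step: kill the coefficient at a nonstandard monomial. -/
lemma step (I : Ideal (MvPolynomial (Fin 3) K))
    (hI : I = Ideal.span { (X 0) ^ 2 + X 1 * X 2, X 0 * X 1, X 0 * X 2 })
    (m : Fin 3 →₀ ℕ) (hm : Nst m) (c : K) :
    ∃ h : MvPolynomial (Fin 3) K, h ∈ I ∧ coeff m h = c ∧
      ∀ m', coeff m' h ≠ 0 → m' = m ∨ LexLT m' m := by
  have single_case : ∀ g : MvPolynomial (Fin 3) K, g ∈ I → ∀ e : Fin 3 →₀ ℕ,
      g = monomial e 1 → e ≤ m →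
      ∃ h : MvPolynomial (Fin 3) K, h ∈ I ∧ coeff m h = c ∧
        ∀ m', coeff m' h ≠ 0 → m' = m ∨ LexLT m' m := by
    intro g hg e hge hle
    refine ⟨monomial (m - e) c * g, Ideal.mul_mem_left _ _ hg, ?_, ?_⟩
    · rw [hge, monomial_mul, mul_one, tsub_add_cancel_of_le hle, coeff_monomial, if_pos rfl]
    · intro m' hm'
      rw [hge, monomial_mul, mul_one, tsub_add_cancel_of_le hle, coeff_monomial] at hm'
      by_cases hmm : m = m'
      · exact Or.inl hmm.symm
      · rw [if_neg hmm] at hm'; exact absurd rfl hm'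
  rcases hm with h | h | h | h | h
  · -- x² case, use x² + yz
    have hle : e0 ≤ m := by
      have h3 := e0_apply
      simp only [Prod.mk.injEq] at h3
      exact le_of_apply (by omega) (by omega) (by omega)
    have hkey : (monomial (m - e0) c : MvPolynomial (Fin 3) K) * ((X 0) ^ 2 + X 1 * X 2)
        = monomial m c + monomial ((m - e0) + eyz) c := by
      rw [hg0, mul_add, monomial_mul, monomial_mul, mul_one, tsub_add_cancel_of_le hle]
    have hlt : LexLT ((m - e0) + eyz) m := by
      have h2 : LexLT eyz e0 := by
        rw [lexlt_iff]
        have h3 := e0_apply; have h4 := eyz_apply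
        simp only [Prod.mk.injEq] at h3 h4
        omega
      have := lexlt_add (m - e0) h2
      rwa [tsub_add_cancel_of_le hle] at this
    have hne : (m - e0) + eyz ≠ m := fun h => lexlt_irrefl m (by rwa [h] at hlt)
    refine ⟨monomial (m - e0) c * ((X 0) ^ 2 + X 1 * X 2),
      Ideal.mul_mem_left _ _ (mem1 I hI), ?_, ?_⟩
    · rw [hkey, coeff_add, coeff_monomial, coeff_monomial, if_pos rfl, if_neg hne, add_zero]
    · intro m' hm'
      rw [hkey, coeff_add, coeff_monomial, coeff_monomial] at hm'
      by_cases h1 : m = m'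
      · exact Or.inl h1.symm
      · rw [if_neg h1] at hm'
        by_cases h2 : (m - e0) + eyz = m'
        · exact Or.inr (by rwa [h2] at hlt)
        · rw [if_neg h2] at hm'; simp at hm'
  · refine single_case _ (mem2 I hI) e1 hg1 ?_
    have h3 := e1_apply; simp only [Prod.mk.injEq] at h3
    exact le_of_apply (by omega) (by omega) (by omega)
  · refine single_case _ (mem3 I hI) e2 hg2 ?_
    have h3 := e2_apply; simp only [Prod.mk.injEq] at h3
    exact le_of_apply (by omega) (by omega) (by omega)
  · refine single_case _ (mem4 I hI) e3 hg3 ?_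
    have h3 := e3_apply; simp only [Prod.mk.injEq] at h3
    exact le_of_apply (by omega) (by omega) (by omega)
  · refine single_case _ (mem5 I hI) e4 hg4 ?_
    have h3 := e4_apply; simp only [Prod.mk.injEq] at h3
    exact le_of_apply (by omega) (by omega) (by omega)

/-- Reduction modulo the Gröbner basis, by well-founded induction on the lex order. -/
lemma reduce (I : Ideal (MvPolynomial (Fin 3) K))
    (hI : I = Ideal.span { (X 0) ^ 2 + X 1 * X 2, X 0 * X 1, X 0 * X 2 })
    (b : Fin 3 →₀ ℕ) :
    ∀ f, f ∈ I → (∀ m ∈ f.support, Nst m → LexLT m b) →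
      ∃ g, g ∈ I ∧ (∀ m ∈ g.support, ¬ Nst m) ∧
        ∀ m, ¬ LexLT m b → coeff m g = coeff m f := by
  classical
  refine lexlt_wf.induction
    (C := fun b => ∀ f, f ∈ I → (∀ m ∈ f.support, Nst m → LexLT m b) →
      ∃ g, g ∈ I ∧ (∀ m ∈ g.support, ¬ Nst m) ∧
        ∀ m, ¬ LexLT m b → coeff m g = coeff m f) b ?_
  intro b IH f hf hsupp
  by_cases hstd : ∀ m ∈ f.support, ¬ Nst m
  · exact ⟨f, hf, hstd, fun m _ => rfl⟩
  · push_neg at hstd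
    obtain ⟨m0, hm0s, hm0n⟩ := hstd
    obtain ⟨mx, hmxT, hmax⟩ := exists_lex_max (f.support.filter (fun m => Nst m))
      ⟨m0, Finset.mem_filter.mpr ⟨hm0s, hm0n⟩⟩
    rw [Finset.mem_filter] at hmxT
    obtain ⟨hmxs, hmxn⟩ := hmxT
    have hmxb : LexLT mx b := hsupp mx hmxs hmxn
    obtain ⟨h, hhI, hhc, hhsupp⟩ := step I hI mx hmxn (coeff mx f)
    have hsupp' : ∀ m ∈ (f - h).support, Nst m → LexLT m mx := by
      intro m hm hNst
      have hmne : coeff m (f - h) ≠ 0 := mem_support_iff.mp hm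
      rw [coeff_sub] at hmne
      by_cases hmm : m = mx
      · subst hmm; rw [hhc, sub_self] at hmne; exact absurd rfl hmne
      · by_cases hch : coeff m h = 0
        · have hcf : coeff m f ≠ 0 := by
            intro h0; rw [h0, hch, sub_zero] at hmne; exact hmne rfl
          rcases hmax m (Finset.mem_filter.mpr ⟨mem_support_iff.mpr hcf, hNst⟩) with h1 | h1
          · exact absurd h1 hmm
          · exact h1
        · rcases hhsupp m hch with h1 | h1
          · exact absurd h1 hmm
          · exact h1
    obtain ⟨g, hgI, hgstd, hgc⟩ := IH mx hmxb (f - h) (sub_mem hf hhI) hsupp'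
    refine ⟨g, hgI, hgstd, ?_⟩
    intro m hmb
    have h1 : ¬ LexLT m mx := fun hlt => hmb (lexlt_trans hlt hmxb)
    have h2 : coeff m h = 0 := by
      by_contra hch
      rcases hhsupp m hch with h3 | h3
      · subst h3; exact hmb hmxb
      · exact h1 h3
    rw [hgc m h1, coeff_sub, h2, sub_zero]

noncomputable def vmap (K : Type*) [Field K] : Fin 3 → MvPolynomial (Fin 2) K :=
  ![X 0 * X 1, -((X 0) ^ 2), (X 1) ^ 2]

lemma vmap_0 : vmap K 0 = X 0 * X 1 := rfl
lemma vmap_1 : vmap K 1 = -((X 0) ^ 2) := rfl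
lemma vmap_2 : vmap K 2 = (X 1) ^ 2 := rfl

lemma mono2 (p q : ℕ) : ((X 0) ^ p * (X 1) ^ q : MvPolynomial (Fin 2) K)
    = monomial (Finsupp.single 0 p + Finsupp.single 1 q) 1 := by
  rw [X_pow_eq_monomial, X_pow_eq_monomial, monomial_mul, one_mul]

noncomputable def psi (m : Fin 3 →₀ ℕ) : Fin 2 →₀ ℕ :=
  Finsupp.single 0 (m 0 + 2 * m 1) + Finsupp.single 1 (m 0 + 2 * m 2)

lemma psi_0 (m : Fin 3 →₀ ℕ) : psi m 0 = m 0 + 2 * m 1 := by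
  simp [psi, Finsupp.single_apply]

lemma psi_1 (m : Fin 3 →₀ ℕ) : psi m 1 = m 0 + 2 * m 2 := by
  simp [psi, Finsupp.single_apply]

lemma psi_inj {m m' : Fin 3 →₀ ℕ} (h : ¬ Nst m) (h' : ¬ Nst m')
    (he : psi m = psi m') : m = m' := by
  have h0 := congrArg (fun t => t 0) he
  have h1 := congrArg (fun t => t 1) he
  simp only [psi_0, psi_1] at h0 h1
  unfold Nst at h h'
  exact finsupp3_ext (by omega) (by omega) (by omega)

lemma phi_mono (m : Fin 3 →₀ ℕ) (c : K) :
    aeval (vmap K) (monomial m c) = monomial (psi m) ((-1) ^ (m 1) * c) := by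
  rw [monomial_eq, Finsupp.prod_pow, Fin.prod_univ_three]
  rw [show monomial (psi m) ((-1 : K) ^ (m 1) * c)
      = C ((-1) ^ (m 1) * c) * ((X 0) ^ (m 0 + 2 * m 1) * (X 1) ^ (m 0 + 2 * m 2)) by
    rw [mono2, C_mul_monomial, mul_one]; rfl]
  simp only [map_mul, map_pow, aeval_C, aeval_X, vmap_0, vmap_1, vmap_2, algebraMap_eq]
  rw [show (C (-1 : K) : MvPolynomial (Fin 2) K) = -1 by simp]
  ring

lemma coeff_phi (g : MvPolynomial (Fin 3) K) (m : Fin 3 →₀ ℕ) (hm : m ∈ g.support)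
    (hstd : ∀ m' ∈ g.support, ¬ Nst m') :
    coeff (psi m) (aeval (vmap K) g) = (-1) ^ (m 1) * coeff m g := by
  conv_lhs => rw [g.as_sum, map_sum]
  rw [coeff_sum]
  simp_rw [phi_mono]
  rw [Finset.sum_eq_single_of_mem m hm]
  · rw [coeff_monomial, if_pos rfl]
  · intro u hu hne
    rw [coeff_monomial, if_neg]
    exact fun he => hne (psi_inj (hstd u hu) (hstd m hm) he)

/-- No nonzero element of `I` is supported entirely on standard monomials. -/
lemma claimB (I : Ideal (MvPolynomial (Fin 3) K))
    (hI : I = Ideal.span { (X 0) ^ 2 + X 1 * X 2, X 0 * X 1, X 0 * X 2 })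
    (g : MvPolynomial (Fin 3) K) (hg : g ∈ I)
    (hstd : ∀ m ∈ g.support, ¬ Nst m) : g = 0 := by
  have e31 : ((X 0) ^ 3 * X 1 : MvPolynomial (Fin 2) K)
      = monomial (Finsupp.single 0 3 + Finsupp.single 1 1) 1 := by
    rw [← mono2, pow_one]
  have e13 : ((X 0) * (X 1) ^ 3 : MvPolynomial (Fin 2) K)
      = monomial (Finsupp.single 0 1 + Finsupp.single 1 3) 1 := by
    rw [← mono2, pow_one]
  have hmap : aeval (vmap K) g ∈ Ideal.span ((fun s => monomial s (1 : K)) ''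
      ({Finsupp.single 0 3 + Finsupp.single 1 1,
        Finsupp.single 0 1 + Finsupp.single 1 3} : Set (Fin 2 →₀ ℕ))) := by
    have h1 : aeval (vmap K) g ∈ Ideal.map (aeval (vmap K) :
        MvPolynomial (Fin 3) K →ₐ[K] MvPolynomial (Fin 2) K) I :=
      Ideal.mem_map_of_mem _ hg
    rw [hI, Ideal.map_span] at h1
    refine Ideal.span_le.mpr ?_ h1
    rintro p ⟨q, hq, rfl⟩
    simp only [Set.mem_insert_iff, Set.mem_singleton_iff] at hq
    rcases hq with rfl | rfl | rfl
    · have hz : aeval (vmap K) ((X 0) ^ 2 + X 1 * X 2 : MvPolynomial (Fin 3) K) = 0 := by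
        simp only [map_add, map_mul, map_pow, aeval_X, vmap_0, vmap_1, vmap_2]
        ring
      rw [hz]; exact zero_mem _
    · have hz : aeval (vmap K) ((X 0) * X 1 : MvPolynomial (Fin 3) K)
          = -(monomial (Finsupp.single 0 3 + Finsupp.single 1 1) (1 : K)) := by
        simp only [map_mul, aeval_X, vmap_0, vmap_1]
        rw [← e31]; ring
      rw [hz]
      exact neg_mem (Ideal.subset_span ⟨_, Set.mem_insert _ _, rfl⟩)
    · have hz : aeval (vmap K) ((X 0) * X 2 : MvPolynomial (Fin 3) K)
          = monomial (Finsupp.single 0 1 + Finsupp.single 1 3) (1 : K) := by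
        simp only [map_mul, aeval_X, vmap_0, vmap_2]
        rw [← e13]; ring
      rw [hz]
      exact Ideal.subset_span ⟨_, Set.mem_insert_of_mem _ rfl, rfl⟩
  rw [mem_ideal_span_monomial_image] at hmap
  refine MvPolynomial.ext _ _ fun m => ?_
  rw [coeff_zero]
  by_contra hc
  have hm : m ∈ g.support := mem_support_iff.mpr hc
  have hstdm := hstd m hm
  have hne : coeff (psi m) (aeval (vmap K) g) ≠ 0 := by
    rw [coeff_phi g m hm hstd]
    exact mul_ne_zero (pow_ne_zero _ (neg_ne_zero.mpr one_ne_zero)) hc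
  obtain ⟨si, hsi, hle⟩ := hmap (psi m) (mem_support_iff.mpr hne)
  rw [Finsupp.le_def] at hle
  have hle0 := hle 0
  have hle1 := hle 1
  simp only [Set.mem_insert_iff, Set.mem_singleton_iff] at hsi
  unfold Nst at hstdm
  rcases hsi with rfl | rfl <;>
    simp only [Finsupp.add_apply, Finsupp.single_apply, psi_0, psi_1] at hle0 hle1 <;>
    simp at hle0 hle1 <;> omega

/-- The lead monomial of any nonzero element of `I` is nonstandard. -/
lemma key (I : Ideal (MvPolynomial (Fin 3) K))
    (hI : I = Ideal.span { (X 0) ^ 2 + X 1 * X 2, X 0 * X 1, X 0 * X 2 })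
    (f : MvPolynomial (Fin 3) K) (hf : f ∈ I) (m : Fin 3 →₀ ℕ)
    (hlm : IsLeadMon LexLT f m) : Nst m := by
  by_contra hNst
  have hb : ∀ m' ∈ f.support, Nst m' → LexLT m' m := by
    intro m' hm' hn
    refine hlm.2 m' hm' (fun he => hNst ?_)
    rwa [he] at hn
  obtain ⟨g, hgI, hgstd, hgc⟩ := reduce I hI m f hf hb
  have hcg : coeff m g = coeff m f := hgc m (lexlt_irrefl m)
  have hg0 : g = 0 := claimB I hI g hgI hgstd
  rw [hg0, coeff_zero] at hcg
  exact mem_support_iff.mp hlm.1 hcg.symm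

/-- Witnesses which are a single monomial. -/
lemma mono_witness (I : Ideal (MvPolynomial (Fin 3) K))
    (e : Fin 3 →₀ ℕ) (g : MvPolynomial (Fin 3) K) (hgI : g ∈ I)
    (hge : g = monomial e 1) :
    ∃ f ∈ I, f ≠ 0 ∧ ∃ m, IsLeadMon LexLT f m ∧ g = monomial m (1 : K) := by
  refine ⟨g, hgI, ?_, e, ⟨?_, ?_⟩, hge⟩
  · rw [hge]
    exact fun h => one_ne_zero (monomial_eq_zero.mp h)
  · rw [hge, mem_support_iff, coeff_monomial, if_pos rfl]
    exact one_ne_zero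
  · intro m' hm' hne
    rw [hge, mem_support_iff, coeff_monomial] at hm'
    rw [if_neg (fun h => hne h.symm)] at hm'
    exact absurd rfl hm'

end GB


/-- For `I = (x² + yz, xy, xz) ⊆ K[x,y,z]` and the lex order with `x > y > z`,
`in_lex(I) = (x², xy, xz, yz², y²z)`. -/
theorem initial_ideal_example
    (I : Ideal (MvPolynomial (Fin 3) K))
    (hI : I = Ideal.span { (X 0) ^ 2 + X 1 * X 2, X 0 * X 1, X 0 * X 2 }) :
    initialIdeal LexLT I =
      Ideal.span { (X 0) ^ 2, X 0 * X 1, X 0 * X 2,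
        X 1 * (X 2) ^ 2, (X 1) ^ 2 * X 2 } := by
  apply le_antisymm
  · -- `in(I) ⊆ (x², xy, xz, yz², y²z)`
    unfold initialIdeal
    rw [Ideal.span_le]
    rintro p ⟨f, hfI, -, m, hlm, rfl⟩
    rw [SetLike.mem_coe]
    have h5 := GB.key I hI f hfI m hlm
    have main : ∀ e : Fin 3 →₀ ℕ, ∀ g : MvPolynomial (Fin 3) K,
        g ∈ ({ (X 0) ^ 2, X 0 * X 1, X 0 * X 2, X 1 * (X 2) ^ 2, (X 1) ^ 2 * X 2 } :
          Set (MvPolynomial (Fin 3) K)) →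
        g = monomial e 1 → e ≤ m →
        (monomial m (1 : K)) ∈ Ideal.span
          ({ (X 0) ^ 2, X 0 * X 1, X 0 * X 2, X 1 * (X 2) ^ 2, (X 1) ^ 2 * X 2 } :
            Set (MvPolynomial (Fin 3) K)) := by
      intro e g hgmem hge hle
      have : (monomial m (1 : K)) = monomial (m - e) 1 * g := by
        rw [hge, monomial_mul, mul_one, tsub_add_cancel_of_le hle]
      rw [this]
      exact Ideal.mul_mem_left _ _ (Ideal.subset_span hgmem)
    have hX2 : ((X 0) ^ 2 : MvPolynomial (Fin 3) K) = monomial GB.e0 1 := by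
      rw [X_pow_eq_monomial]; rfl
    rcases h5 with h | h | h | h | h
    · refine main GB.e0 _ (Set.mem_insert _ _) hX2 ?_
      have h3 := GB.e0_apply; simp only [Prod.mk.injEq] at h3
      exact GB.le_of_apply (by omega) (by omega) (by omega)
    · refine main GB.e1 _ (Set.mem_insert_of_mem _ (Set.mem_insert _ _)) GB.hg1 ?_
      have h3 := GB.e1_apply; simp only [Prod.mk.injEq] at h3
      exact GB.le_of_apply (by omega) (by omega) (by omega)
    · refine main GB.e2 _
        (Set.mem_insert_of_mem _ (Set.mem_insert_of_mem _ (Set.mem_insert _ _))) GB.hg2 ?_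
      have h3 := GB.e2_apply; simp only [Prod.mk.injEq] at h3
      exact GB.le_of_apply (by omega) (by omega) (by omega)
    · refine main GB.e3 _
        (Set.mem_insert_of_mem _ (Set.mem_insert_of_mem _
          (Set.mem_insert_of_mem _ (Set.mem_insert _ _)))) GB.hg3 ?_
      have h3 := GB.e3_apply; simp only [Prod.mk.injEq] at h3
      exact GB.le_of_apply (by omega) (by omega) (by omega)
    · refine main GB.e4 _
        (Set.mem_insert_of_mem _ (Set.mem_insert_of_mem _
          (Set.mem_insert_of_mem _ (Set.mem_insert_of_mem _ rfl)))) GB.hg4 ?_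
      have h3 := GB.e4_apply; simp only [Prod.mk.injEq] at h3
      exact GB.le_of_apply (by omega) (by omega) (by omega)
  · -- `(x², xy, xz, yz², y²z) ⊆ in(I)`
    rw [Ideal.span_le]
    rintro p hp
    rw [SetLike.mem_coe]
    unfold initialIdeal
    apply Ideal.subset_span
    simp only [Set.mem_insert_iff, Set.mem_singleton_iff] at hp
    have hyz_ne : GB.eyz ≠ GB.e0 := by
      intro h
      have h1 := congrArg (fun t => t 0) h
      have h3 := GB.e0_apply; have h4 := GB.eyz_apply
      simp only [Prod.mk.injEq] at h3 h4
      omega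
    rcases hp with rfl | rfl | rfl | rfl | rfl
    · -- x², witness x² + yz
      have hcoe : coeff GB.e0 ((X 0) ^ 2 + X 1 * X 2 : MvPolynomial (Fin 3) K) = 1 := by
        rw [GB.hg0, coeff_add, coeff_monomial, coeff_monomial, if_pos rfl,
          if_neg hyz_ne, add_zero]
      refine ⟨(X 0) ^ 2 + X 1 * X 2, GB.mem1 I hI, ?_, GB.e0, ⟨?_, ?_⟩, ?_⟩
      · intro h
        rw [h, coeff_zero] at hcoe
        exact zero_ne_one hcoe
      · rw [mem_support_iff, hcoe]
        exact one_ne_zero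
      · intro m' hm' hne
        rw [mem_support_iff, GB.hg0, coeff_add, coeff_monomial, coeff_monomial] at hm'
        rw [if_neg (fun h => hne h.symm)] at hm'
        by_cases h2 : GB.eyz = m'
        · subst h2
          rw [GB.lexlt_iff]
          have h3 := GB.e0_apply; have h4 := GB.eyz_apply
          simp only [Prod.mk.injEq] at h3 h4
          omega
        · rw [if_neg h2] at hm'
          simp at hm'
      · rw [X_pow_eq_monomial]; rfl
    · exact GB.mono_witness I GB.e1 _ (GB.mem2 I hI) GB.hg1
    · exact GB.mono_witness I GB.e2 _ (GB.mem3 I hI) GB.hg2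
    · exact GB.mono_witness I GB.e3 _ (GB.mem4 I hI) GB.hg3
    · exact GB.mono_witness I GB.e4 _ (GB.mem5 I hI) GB.hg4
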